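/- arXiv:1705.04116 — 3 statements merged into one kernel-verified Lean document; each statement's English description precedes it below -/
import Mathlib

section
/- Let η(ζ) = Σ_{k=0}^M a_k ζ^k with real coefficients a_k, θ ∈ ℝ, z_1 ∈ ℂ, λ > 0, and define the panel curve z_p(ζ) = (ζ + i·η(ζ))e^{iθ} + z_1 for ζ ∈ [0, λ]. Let R > 0 and z_0 ∈ ℂ be such that |z_p(ζ) - z_0| ≤ R for all ζ ∈ [0, λ]. Then for every z with |z - z_0| > R, ∫_0^λ γ(ζ)/(z - z_p(ζ)) dζ = Σ_{n=1}^{∞} f_n/(z - z_0)^n, where f_n = ∫_0^λ γ(ζ)·(z_p(ζ) - z_0)^{n-1} dζ and γ(ζ) = Σ_{j=0}^N b_j ζ^j, the series converging absolutely. -/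
open Finset
open MeasureTheory

/-- Multipole (far-field) expansion of the panel integral: if the panel curve
z_p(ζ) = (ζ + i·Σ a_k ζ^k)e^{iθ} + z₁ stays within distance R of z₀ on [0,λ],
then for |z - z₀| > R the panel integral ∫₀^λ γ(ζ)/(z - z_p(ζ)) dζ equals the
absolutely convergent series Σ_{n≥1} f_n/(z-z₀)^n with
f_n = ∫₀^λ γ(ζ)(z_p(ζ)-z₀)^{n-1} dζ. -/
theorem stmt8 (N M : ℕ) (a : ℕ → ℝ) (b : ℕ → ℂ) (θ : ℝ) (z1 z0 z : ℂ)
    (lam R : ℝ) (hlam : 0 < lam) (hR : 0 < R)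
    (zp : ℝ → ℂ)
    (hzp : ∀ ζ : ℝ, zp ζ =
      ((ζ:ℂ) + Complex.I * ∑ k ∈ range (M+1), (a k : ℂ) * (ζ:ℂ)^k)
        * Complex.exp (Complex.I * (θ:ℂ)) + z1)
    (g : ℝ → ℂ) (hg : ∀ ζ : ℝ, g ζ = ∑ j ∈ range (N+1), b j * (ζ:ℂ)^j)
    (hRbound : ∀ ζ ∈ Set.Icc (0:ℝ) lam, ‖zp ζ - z0‖ ≤ R)
    (hz : R < ‖z - z0‖) :
    HasSum (fun n : ℕ =>
        (∫ ζ in (0:ℝ)..lam, g ζ * (zp ζ - z0)^n) / (z - z0)^(n+1))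
      (∫ ζ in (0:ℝ)..lam, g ζ / (z - zp ζ)) ∧
    Summable (fun n : ℕ =>
        ‖(∫ ζ in (0:ℝ)..lam, g ζ * (zp ζ - z0)^n) / (z - z0)^(n+1)‖) := by
  have hzp' : zp = fun ζ : ℝ => ((ζ:ℂ) + Complex.I * ∑ k ∈ range (M+1), (a k : ℂ) * (ζ:ℂ)^k) * Complex.exp (Complex.I * (θ:ℂ)) + z1 := funext hzp
  have hg' : g = fun ζ : ℝ => ∑ j ∈ range (N+1), b j * (ζ:ℂ)^j := funext hg
  have hzpc : Continuous zp := by rw [hzp']; continuity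
  have hgc : Continuous g := by rw [hg']; continuity
  have hu0 : (0:ℝ) < ‖z - z0‖ := hR.trans hz
  have huz : z - z0 ≠ 0 := by
    intro h; rw [h] at hu0; simp at hu0
  obtain ⟨C, hC⟩ := IsCompact.exists_bound_of_continuousOn (isCompact_Icc (a := (0:ℝ)) (b := lam)) hgc.continuousOn
  have hC0 : 0 ≤ C := le_trans (norm_nonneg (g 0)) (hC 0 ⟨le_refl 0, hlam.le⟩)
  set F : ℕ → ℝ → ℂ := fun n ζ => g ζ * (zp ζ - z0)^n / (z - z0)^(n+1) with hF
  have hFc : ∀ n, Continuous (F n) := fun n => ((hgc.mul ((hzpc.sub continuous_const).pow n)).div_const _)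
  have hFint : ∀ n, MeasureTheory.IntegrableOn (F n) (Set.Ioc 0 lam) := fun n => (hFc n).integrableOn_Ioc
  have hbound : ∀ n, ∀ ζ ∈ Set.Ioc (0:ℝ) lam, ‖F n ζ‖ ≤ C * R^n / ‖z - z0‖^(n+1) := by
    intro n ζ hζ
    have hζ' : ζ ∈ Set.Icc (0:ℝ) lam := Set.Ioc_subset_Icc_self hζ
    have h1 : ‖g ζ‖ ≤ C := hC ζ hζ'
    have h2 : ‖zp ζ - z0‖ ≤ R := hRbound ζ hζ'
    rw [hF]
    simp only [norm_div, norm_mul, norm_pow]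
    gcongr <;> first | exact h1 | exact h2
  have hgeom : Summable (fun n : ℕ => C * lam * R^n / ‖z - z0‖^(n+1)) := by
    have h : ∀ n : ℕ, C * lam * R^n / ‖z - z0‖^(n+1) = (C * lam / ‖z - z0‖) * (R / ‖z - z0‖)^n := by
      intro n; rw [div_pow, div_mul_div_comm, pow_succ]; ring
    rw [funext h]
    exact (summable_geometric_of_lt_one (by positivity) (by rwa [div_lt_one hu0])).mul_left _
  have hnorm_int : ∀ n, ∫ ζ in Set.Ioc (0:ℝ) lam, ‖F n ζ‖ ≤ C * lam * R^n / ‖z - z0‖^(n+1) := by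
    intro n
    have h1 : ∫ ζ in Set.Ioc (0:ℝ) lam, ‖F n ζ‖ ≤ ∫ _ζ in Set.Ioc (0:ℝ) lam, (C * R^n / ‖z - z0‖^(n+1)) :=
      setIntegral_mono_on (hFint n).norm (integrableOn_const measure_Ioc_lt_top.ne) measurableSet_Ioc (hbound n)
    have h2 : ∫ _ζ in Set.Ioc (0:ℝ) lam, (C * R^n / ‖z - z0‖^(n+1)) = lam * (C * R^n / ‖z - z0‖^(n+1)) := by
      rw [setIntegral_const, Measure.real, Real.volume_Ioc, ENNReal.toReal_ofReal (by linarith)]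
      simp
    rw [h2] at h1
    calc ∫ ζ in Set.Ioc (0:ℝ) lam, ‖F n ζ‖ ≤ lam * (C * R^n / ‖z - z0‖^(n+1)) := h1
      _ = C * lam * R^n / ‖z - z0‖^(n+1) := by ring
  have hsum_norm : Summable (fun n => ∫ ζ in Set.Ioc (0:ℝ) lam, ‖F n ζ‖) :=
    Summable.of_nonneg_of_le (fun n => integral_nonneg fun ζ => norm_nonneg _) hnorm_int hgeom
  have hhs := MeasureTheory.hasSum_integral_of_summable_integral_norm (μ := MeasureTheory.volume.restrict (Set.Ioc (0:ℝ) lam)) hFint hsum_norm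
  have hpt : ∀ ζ ∈ Set.Ioc (0:ℝ) lam, ∑' n, F n ζ = g ζ / (z - zp ζ) := by
    intro ζ hζ
    have h2 : ‖zp ζ - z0‖ ≤ R := hRbound ζ (Set.Ioc_subset_Icc_self hζ)
    set w := zp ζ - z0 with hw
    have hz2 : z - zp ζ ≠ 0 := by
      intro h
      have h3 : z - z0 = zp ζ - z0 := by linear_combination h
      rw [h3] at hz
      linarith [hRbound ζ (Set.Ioc_subset_Icc_self hζ)]
    have hwu : ‖w / (z - z0)‖ < 1 := by
      rw [norm_div, div_lt_one (by assumption)]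
      exact lt_of_le_of_lt h2 hz
    have hgs : HasSum (fun n : ℕ => (w/(z-z0))^n) (1 - w/(z-z0))⁻¹ := hasSum_geometric_of_norm_lt_one hwu
    have hgs2 := hgs.mul_left (g ζ / (z - z0))
    have key : (fun n : ℕ => g ζ / (z - z0) * (w/(z-z0))^n) = fun n => F n ζ := by
      funext n; simp only [hF]; rw [pow_succ]; field_simp; rw [div_pow, mul_assoc, div_mul_cancel₀ _ (pow_ne_zero _ huz), hw]
    rw [key] at hgs2
    have hval : g ζ / (z - z0) * (1 - w/(z-z0))⁻¹ = g ζ / (z - zp ζ) := by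
      have h1u : (1:ℂ) - w/(z-z0) = (z - zp ζ)/(z - z0) := by
        rw [hw]; field_simp; ring
      rw [h1u, inv_div]
      field_simp
    rw [hval] at hgs2
    exact hgs2.tsum_eq
  have heq1 : ∀ n : ℕ, (∫ ζ in (0:ℝ)..lam, g ζ * (zp ζ - z0)^n) / (z - z0)^(n+1) = ∫ ζ in Set.Ioc (0:ℝ) lam, F n ζ := by
    intro n
    rw [intervalIntegral.integral_of_le hlam.le, ← MeasureTheory.integral_div]
  have heq2 : (∫ ζ in (0:ℝ)..lam, g ζ / (z - zp ζ)) = ∫ ζ in Set.Ioc (0:ℝ) lam, ∑' n, F n ζ := by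
    rw [intervalIntegral.integral_of_le hlam.le]
    exact setIntegral_congr_fun measurableSet_Ioc fun ζ hζ => (hpt ζ hζ).symm
  constructor
  · rw [heq2]
    exact (funext heq1 : _) ▸ hhs
  · apply Summable.of_nonneg_of_le (fun n => norm_nonneg _) _ hsum_norm
    intro n
    rw [heq1 n]
    exact norm_integral_le_integral_norm _
end

section
/- Fix g_0, g_1, ... ∈ ℂ (the true strength coefficients) and for m,k ≥ 0 functions h_{m+1,k}(λ) bounded as λ → 0 with h_{m+1,k}(λ) = O(1). Suppose the (N+1)×(N+1) matrix A(λ) with entries A_{m,k} = λ^{k+m+1} h_{m+1,k}(λ) is invertible with ‖A(λ)^{-1}‖ ≤ C·max_m λ^{-(m+1)}·max_k λ^{-k} appropriately (i.e., A = D_1 H D_2 with diagonal D_1, D_2 of powers of λ and H invertible uniformly). Let c_m = Σ_{k=0}^∞ g_k λ^{k+m+1} h_{m+1,k} (assumed absolutely convergent for small λ) and b = A^{-1}c. Then b = g_{0:N} + b_2 where every component of b_2 = A^{-1}c_2 (c_{2,m} = Σ_{k>N} g_k λ^{k+m+1} h_{m+1,k}) satisfies b_{2,k} = O(λ^{N+1-k}),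 and in particular b_{2,0} = O(λ^{N+1}). -/
open Finset

lemma tail_summable14 {g : ℕ → ℂ} {l : ℝ} (hl : 0 < l) (M : ℕ)
    (hs : Summable (fun k => ‖g k‖ * l ^ k)) :
    Summable (fun j => ‖g (j + M)‖ * l ^ j) := by
  have h1 : Summable (fun j => ‖g (j + M)‖ * l ^ (j + M)) :=
    (summable_nat_add_iff M).2 hs
  refine (h1.mul_right ((l ^ M)⁻¹)).congr fun j => ?_
  rw [pow_add]
  field_simp

/-- Linear-algebra core of the far-field convergence estimate: for the
matching system A(λ)b = c with A_{m,k} = λ^{k+m+1}h_{m+1,k}(λ), h = O(1),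
A = D₁HD₂ with uniformly invertible H (encoded by the entrywise bound
|A⁻¹_{k,m}| ≤ C/λ^{k+m+1}), and absolutely convergent data
c_m = Σ_k g_k λ^{k+m+1}h_{m+1,k}, the solution splits as b = g + b₂ with
b₂ = A⁻¹c₂ (c₂ the tail over k > N) and b₂,k = O(λ^{N+1-k}). -/
theorem stmt14 (N : ℕ) (g : ℕ → ℂ) (h : ℕ → ℕ → ℝ → ℂ)
    (A : ℝ → Matrix (Fin (N+1)) (Fin (N+1)) ℂ)
    (hA : ∀ l : ℝ, ∀ m k : Fin (N+1),
      A l m k = (l:ℂ)^((k:ℕ) + (m:ℕ) + 1) * h ((m:ℕ)+1) (k:ℕ) l)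
    (hbound : ∃ C lam0 : ℝ, 0 < lam0 ∧
      ∀ m k : ℕ, ∀ l ∈ Set.Ioo (0:ℝ) lam0, ‖h (m+1) k l‖ ≤ C)
    (hinv : ∃ C lam0 : ℝ, 0 < lam0 ∧ ∀ l ∈ Set.Ioo (0:ℝ) lam0,
      IsUnit (A l) ∧
      ∀ k m : Fin (N+1), ‖(A l)⁻¹ k m‖ ≤ C / l^((k:ℕ) + (m:ℕ) + 1))
    (hsum : ∃ lam0 : ℝ, 0 < lam0 ∧ ∀ l ∈ Set.Ioo (0:ℝ) lam0,
      Summable (fun k : ℕ => ‖g k‖ * l^k))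
    (c c2 : ℝ → Fin (N+1) → ℂ)
    (hc : ∀ l : ℝ, ∀ m : Fin (N+1), c l m =
      ∑' k : ℕ, g k * (l:ℂ)^(k + (m:ℕ) + 1) * h ((m:ℕ)+1) k l)
    (hc2 : ∀ l : ℝ, ∀ m : Fin (N+1), c2 l m =
      ∑' k : ℕ, g (k + N + 1) * (l:ℂ)^((k + N + 1) + (m:ℕ) + 1)
        * h ((m:ℕ)+1) (k + N + 1) l)
    (b b2 : ℝ → Fin (N+1) → ℂ)
    (hb : ∀ l : ℝ, b l = (A l)⁻¹.mulVec (c l))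
    (hb2 : ∀ l : ℝ, b2 l = (A l)⁻¹.mulVec (c2 l)) :
    ∃ C lam1 : ℝ, 0 < lam1 ∧ ∀ l ∈ Set.Ioo (0:ℝ) lam1,
      (∀ k : Fin (N+1), b l k = g (k:ℕ) + b2 l k) ∧
      (∀ k : Fin (N+1), ‖b2 l k‖ ≤ C * l^(N + 1 - (k:ℕ))) := by
  obtain ⟨Ch, l0h, hl0h, hCh⟩ := hbound
  obtain ⟨Ci, l0i, hl0i, hCi⟩ := hinv
  obtain ⟨l0s, hl0s, hSg⟩ := hsum
  set ls := l0s / 2 with hlsdef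
  have hls0 : 0 < ls := by positivity
  have hlsmem : ls ∈ Set.Ioo (0:ℝ) l0s := ⟨hls0, by rw [hlsdef]; linarith⟩
  have hSstar : Summable (fun j => ‖g (j + (N+1))‖ * ls ^ j) :=
    tail_summable14 hls0 (N+1) (hSg ls hlsmem)
  set S := ∑' j, ‖g (j + (N+1))‖ * ls ^ j with hSdef
  have hS0 : 0 ≤ S := tsum_nonneg fun j => by positivity
  have hCh0 : 0 ≤ Ch :=
    le_trans (norm_nonneg _) (hCh 0 0 (l0h/2) ⟨by positivity, by linarith⟩)
  have hCi0 : 0 ≤ Ci := by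
    have h1 := (hCi (l0i/2) ⟨by positivity, by linarith⟩).2 0 0
    have h0 : (0:ℝ) ≤ Ci / (l0i/2)^((((0:Fin (N+1)):ℕ)) + (((0:Fin (N+1)):ℕ)) + 1) :=
      le_trans (norm_nonneg _) h1
    have hp : (0:ℝ) < (l0i/2)^((((0:Fin (N+1)):ℕ)) + (((0:Fin (N+1)):ℕ)) + 1) := by positivity
    by_contra hneg
    push_neg at hneg
    have : Ci / (l0i/2)^((((0:Fin (N+1)):ℕ)) + (((0:Fin (N+1)):ℕ)) + 1) < 0 :=
      div_neg_of_neg_of_pos hneg hp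
    linarith
  refine ⟨((N:ℝ)+1) * Ci * Ch * S, min (min l0h l0i) ls, by positivity, fun l hl => ?_⟩
  obtain ⟨hl0, hlu⟩ := hl
  have hllh : l < l0h := lt_of_lt_of_le hlu (le_trans (min_le_left _ _) (min_le_left _ _))
  have hlli : l < l0i := lt_of_lt_of_le hlu (le_trans (min_le_left _ _) (min_le_right _ _))
  have hlls : l < ls := lt_of_lt_of_le hlu (min_le_right _ _)
  have hlmemi : l ∈ Set.Ioo (0:ℝ) l0i := ⟨hl0, hlli⟩
  have hlmemh : l ∈ Set.Ioo (0:ℝ) l0h := ⟨hl0, hllh⟩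
  have hlmems : l ∈ Set.Ioo (0:ℝ) l0s := ⟨hl0, by rw [hlsdef] at hlls; linarith⟩
  have Sgl : Summable (fun k => ‖g k‖ * l ^ k) := hSg l hlmems
  have Tl : Summable (fun j => ‖g (j + (N+1))‖ * l ^ j) := tail_summable14 hl0 (N+1) Sgl
  have hT_le_S : (∑' j, ‖g (j + (N+1))‖ * l ^ j) ≤ S := by
    refine Summable.tsum_le_tsum (fun j => ?_) Tl hSstar
    exact mul_le_mul_of_nonneg_left (pow_le_pow_left₀ hl0.le hlls.le j) (norm_nonneg _)
  have hlC : ‖(l:ℂ)‖ = l := by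
    rw [Complex.norm_real, Real.norm_eq_abs, abs_of_pos hl0]
  -- norms of summands
  have hFnorm : ∀ m : Fin (N+1), ∀ k : ℕ,
      ‖g k * (l:ℂ)^(k + (m:ℕ) + 1) * h ((m:ℕ)+1) k l‖
        ≤ (Ch * l^((m:ℕ)+1)) * (‖g k‖ * l^k) := by
    intro m k
    rw [norm_mul, norm_mul, norm_pow, hlC]
    have hh := hCh (m:ℕ) k l hlmemh
    have hle : ‖g k‖ * l ^ (k + (m:ℕ) + 1) * ‖h ((m:ℕ)+1) k l‖
        ≤ ‖g k‖ * l ^ (k + (m:ℕ) + 1) * Ch := by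
      apply mul_le_mul_of_nonneg_left hh
      positivity
    refine le_trans hle (le_of_eq ?_)
    rw [show k + (m:ℕ) + 1 = k + ((m:ℕ)+1) by ring, pow_add]
    ring
  have hFs : ∀ m : Fin (N+1),
      Summable (fun k => g k * (l:ℂ)^(k + (m:ℕ) + 1) * h ((m:ℕ)+1) k l) :=
    fun m => Summable.of_norm_bounded (Sgl.mul_left _) (hFnorm m)
  -- split c
  have hsplit : ∀ m : Fin (N+1),
      c l m = ((A l).mulVec (fun k : Fin (N+1) => g (k:ℕ))) m + c2 l m := by
    intro m
    rw [hc, hc2, ← Summable.sum_add_tsum_nat_add (N+1) (hFs m)]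
    congr 1
    have : ((A l).mulVec (fun k : Fin (N+1) => g (k:ℕ))) m
        = ∑ k : Fin (N+1), g (k:ℕ) * (l:ℂ)^((k:ℕ) + (m:ℕ) + 1) * h ((m:ℕ)+1) (k:ℕ) l := by
      simp only [Matrix.mulVec, dotProduct, hA]
      exact Finset.sum_congr rfl fun k _ => by ring
    rw [← Fin.sum_univ_eq_sum_range
      (fun k => g k * (l:ℂ)^(k + (m:ℕ) + 1) * h ((m:ℕ)+1) k l) (N+1), this]
  have hu := (hCi l hlmemi).1
  have hudet : IsUnit (A l).det := (Matrix.isUnit_iff_isUnit_det _).mp hu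
  have hbk : ∀ k : Fin (N+1), b l k = g (k:ℕ) + b2 l k := by
    have hcvec : c l = (A l).mulVec (fun k : Fin (N+1) => g (k:ℕ)) + c2 l := funext hsplit
    intro k
    rw [hb, hb2, hcvec, Matrix.mulVec_add, Matrix.mulVec_mulVec,
      Matrix.nonsing_inv_mul _ hudet, Matrix.one_mulVec]
    simp
  refine ⟨hbk, fun k => ?_⟩
  -- bound on c2
  have hc2bound : ∀ m : Fin (N+1), ‖c2 l m‖ ≤ Ch * S * l^(N + (m:ℕ) + 2) := by
    intro m
    rw [hc2]
    have hGnorm : ∀ j : ℕ,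
        ‖g (j + N + 1) * (l:ℂ)^((j + N + 1) + (m:ℕ) + 1) * h ((m:ℕ)+1) (j + N + 1) l‖
          ≤ (Ch * l^(N + (m:ℕ) + 2)) * (‖g (j + (N+1))‖ * l^j) := by
      intro j
      rw [norm_mul, norm_mul, norm_pow, hlC]
      have hh := hCh (m:ℕ) (j + N + 1) l hlmemh
      have hle : ‖g (j + N + 1)‖ * l ^ ((j + N + 1) + (m:ℕ) + 1) * ‖h ((m:ℕ)+1) (j + N + 1) l‖
          ≤ ‖g (j + N + 1)‖ * l ^ ((j + N + 1) + (m:ℕ) + 1) * Ch := by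
        apply mul_le_mul_of_nonneg_left hh
        positivity
      refine le_trans hle (le_of_eq ?_)
      rw [show (j + N + 1) + (m:ℕ) + 1 = j + (N + (m:ℕ) + 2) by ring, pow_add]
      ring
    have hGnorms : Summable (fun j =>
        ‖g (j + N + 1) * (l:ℂ)^((j + N + 1) + (m:ℕ) + 1) * h ((m:ℕ)+1) (j + N + 1) l‖) :=
      Summable.of_nonneg_of_le (fun j => norm_nonneg _) hGnorm (Tl.mul_left _)
    calc ‖∑' j, g (j + N + 1) * (l:ℂ)^((j + N + 1) + (m:ℕ) + 1) * h ((m:ℕ)+1) (j + N + 1) l‖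
        ≤ ∑' j, ‖g (j + N + 1) * (l:ℂ)^((j + N + 1) + (m:ℕ) + 1) * h ((m:ℕ)+1) (j + N + 1) l‖ :=
          norm_tsum_le_tsum_norm hGnorms
      _ ≤ ∑' j, (Ch * l^(N + (m:ℕ) + 2)) * (‖g (j + (N+1))‖ * l^j) :=
          Summable.tsum_le_tsum hGnorm hGnorms (Tl.mul_left _)
      _ = (Ch * l^(N + (m:ℕ) + 2)) * ∑' j, ‖g (j + (N+1))‖ * l^j := tsum_mul_left
      _ ≤ (Ch * l^(N + (m:ℕ) + 2)) * S := by
          apply mul_le_mul_of_nonneg_left hT_le_S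
          positivity
      _ = Ch * S * l^(N + (m:ℕ) + 2) := by ring
  have hterm : ∀ m : Fin (N+1),
      ‖(A l)⁻¹ k m * c2 l m‖ ≤ Ci * Ch * S * l^(N + 1 - (k:ℕ)) := by
    intro m
    rw [norm_mul]
    have h1 := (hCi l hlmemi).2 k m
    have h2 := hc2bound m
    have hexp : N + (m:ℕ) + 2 = ((k:ℕ) + (m:ℕ) + 1) + (N + 1 - (k:ℕ)) := by
      have := k.isLt; omega
    have hlk : (0:ℝ) < l^((k:ℕ) + (m:ℕ) + 1) := by positivity
    calc ‖(A l)⁻¹ k m‖ * ‖c2 l m‖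
        ≤ (Ci / l^((k:ℕ) + (m:ℕ) + 1)) * (Ch * S * l^(N + (m:ℕ) + 2)) :=
          mul_le_mul h1 h2 (norm_nonneg _) (div_nonneg hCi0 hlk.le)
      _ = Ci * Ch * S * l^(N + 1 - (k:ℕ)) := by
          rw [hexp, pow_add]
          field_simp
          ring
  have hmv : (((A l)⁻¹.mulVec (c2 l)) k) = ∑ m : Fin (N+1), (A l)⁻¹ k m * c2 l m := by
    simp [Matrix.mulVec, dotProduct]
  calc ‖b2 l k‖ = ‖∑ m : Fin (N+1), (A l)⁻¹ k m * c2 l m‖ := by rw [hb2, hmv]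
    _ ≤ ∑ m : Fin (N+1), ‖(A l)⁻¹ k m * c2 l m‖ := norm_sum_le _ _
    _ ≤ ∑ _m : Fin (N+1), Ci * Ch * S * l^(N + 1 - (k:ℕ)) :=
        Finset.sum_le_sum (fun m _ => hterm m)
    _ = ((N:ℝ)+1) * Ci * Ch * S * l^(N + 1 - (k:ℕ)) := by
        rw [Finset.sum_const, Finset.card_univ, Fintype.card_fin]
        push_cast
        ring
end

section
/- Under the assumptions of the far-field matching construction, the error in the n-th multipole coefficient satisfies f̂_n − f_n = Σ_{k=0}^N b_{2,k} λ^{k+n} h_{n,k} − Σ_{k=N+1}^∞ g_k λ^{k+n} h_{n,k} = O(λ^{n+N+1}) for every n ≥ 1, and hence the smallest-order error term over all coefficients is O(λ^{2N+3}); dividing by one power of λ to account for the number of panels scaling as 1/λ, the far-field convergence rate of the panel strength approximation is O(λ^{2N+2}). -/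
open Finset

/-- Error of the matched multipole coefficients: with exact coefficients
f_n = Σ_{k≥0} g_k λ^{k+n} h_{n,k}, approximations
f̂_n = Σ_{k≤N} b_k λ^{k+n} h_{n,k}, b = g + b₂, b₂,k = O(λ^{N+1-k}),
h = O(1), and exact matching f̂_n = f_n for n = 1,…,N+1, the error satisfies
f̂_n − f_n = Σ_{k≤N} b₂,k λ^{k+n} h_{n,k} − Σ_{k>N} g_k λ^{k+n} h_{n,k}
           = O(λ^{n+N+1}) for every n ≥ 1,
hence O(λ^{2N+3}) for all coefficients and, after dividing by one power of λ
(number of panels ∝ 1/λ), the far-field rate is O(λ^{2N+2}). -/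
theorem stmt15 (N : ℕ) (g : ℕ → ℂ) (h : ℕ → ℕ → ℝ → ℂ)
    (f fhat : ℕ → ℝ → ℂ) (b b2 : ℝ → ℕ → ℂ)
    (hbound : ∃ C lam0 : ℝ, 0 < lam0 ∧
      ∀ n k : ℕ, ∀ l ∈ Set.Ioo (0:ℝ) lam0, ‖h n k l‖ ≤ C)
    (hsum : ∃ lam0 : ℝ, 0 < lam0 ∧ ∀ l ∈ Set.Ioo (0:ℝ) lam0,
      Summable (fun k : ℕ => ‖g k‖ * l^k))
    (hf : ∀ n : ℕ, ∀ l : ℝ, f n l = ∑' k : ℕ, g k * (l:ℂ)^(k + n) * h n k l)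
    (hbsplit : ∀ l : ℝ, ∀ k ≤ N, b l k = g k + b2 l k)
    (hb2bound : ∃ C lam0 : ℝ, 0 < lam0 ∧
      ∀ k ≤ N, ∀ l ∈ Set.Ioo (0:ℝ) lam0, ‖b2 l k‖ ≤ C * l^(N + 1 - k))
    (hfhat : ∀ n : ℕ, ∀ l : ℝ,
      fhat n l = ∑ k ∈ range (N+1), b l k * (l:ℂ)^(k + n) * h n k l)
    (hmatch : ∃ lam0 : ℝ, 0 < lam0 ∧ ∀ l ∈ Set.Ioo (0:ℝ) lam0,
      ∀ n : ℕ, 1 ≤ n → n ≤ N + 1 → fhat n l = f n l) :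
    (∃ lam0 : ℝ, 0 < lam0 ∧ ∀ l ∈ Set.Ioo (0:ℝ) lam0, ∀ n : ℕ,
        fhat n l - f n l =
          ∑ k ∈ range (N+1), b2 l k * (l:ℂ)^(k + n) * h n k l -
          ∑' k : ℕ, g (k + N + 1) * (l:ℂ)^((k + N + 1) + n) * h n (k + N + 1) l) ∧
    (∃ C lam1 : ℝ, 0 < lam1 ∧ ∀ l ∈ Set.Ioo (0:ℝ) lam1, ∀ n : ℕ, 1 ≤ n →
        ‖fhat n l - f n l‖ ≤ C * l^(n + N + 1) ∧
        ‖fhat n l - f n l‖ ≤ C * l^(2*N + 3) ∧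
        ‖fhat n l - f n l‖ / l ≤ C * l^(2*N + 2)) := by

  obtain ⟨Ch, lamh, hlamh, hhb⟩ := hbound
  obtain ⟨lams, hlams, hgs⟩ := hsum
  obtain ⟨Cb, lamb, hlamb, hb2⟩ := hb2bound
  obtain ⟨lamm, hlamm, hm⟩ := hmatch
  have hterm : ∀ (c : ℂ) (n k : ℕ) (l : ℝ), 0 < l →
      ‖c * (l:ℂ)^(k+n) * h n k l‖ = ‖c‖ * l^(k+n) * ‖h n k l‖ := by
    intro c n k l hl
    rw [norm_mul, norm_mul, norm_pow, Complex.norm_real, Real.norm_eq_abs,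
      abs_of_pos hl]
  set lam0 := min lamh lams with hlam0def
  have hlam0 : 0 < lam0 := lt_min hlamh hlams
  have hsumm : ∀ l ∈ Set.Ioo (0:ℝ) lam0, ∀ n : ℕ,
      Summable (fun k => g k * (l:ℂ)^(k+n) * h n k l) := by
    intro l hl n
    have hl0 : 0 < l := hl.1
    apply Summable.of_norm
    have hbig : Summable (fun k => (|Ch| * l^n) * (‖g k‖ * l^k)) :=
      ((hgs l ⟨hl.1, lt_of_lt_of_le hl.2 (min_le_right _ _)⟩).mul_left _)
    apply hbig.of_nonneg_of_le (fun k => norm_nonneg _)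
    intro k
    rw [hterm _ n k l hl0]
    have h1 : ‖h n k l‖ ≤ |Ch| :=
      le_trans (hhb n k l ⟨hl.1, lt_of_lt_of_le hl.2 (min_le_left _ _)⟩) (le_abs_self _)
    calc ‖g k‖ * l^(k+n) * ‖h n k l‖ ≤ ‖g k‖ * l^(k+n) * |Ch| := by
          have : (0:ℝ) ≤ ‖g k‖ * l^(k+n) := by positivity
          exact mul_le_mul_of_nonneg_left h1 this
      _ = (|Ch| * l^n) * (‖g k‖ * l^k) := by rw [pow_add]; ring
  have hid : ∀ l ∈ Set.Ioo (0:ℝ) lam0, ∀ n : ℕ,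
      fhat n l - f n l =
        ∑ k ∈ range (N+1), b2 l k * (l:ℂ)^(k + n) * h n k l -
        ∑' k : ℕ, g (k + N + 1) * (l:ℂ)^((k + N + 1) + n) * h n (k + N + 1) l := by
    intro l hl n
    have hs := hsumm l hl n
    have hsplit := hs.sum_add_tsum_nat_add (N+1)
    have hre : ∑' (k:ℕ), g (k + (N+1)) * (l:ℂ)^((k + (N+1)) + n) * h n (k + (N+1)) l
        = ∑' (k:ℕ), g (k + N + 1) * (l:ℂ)^((k + N + 1) + n) * h n (k + N + 1) l := by
      apply tsum_congr; intro k
      norm_num [← add_assoc]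
    rw [hf n l, hfhat n l]
    have hb' : ∑ k ∈ range (N+1), b l k * (l:ℂ)^(k+n) * h n k l
        = ∑ k ∈ range (N+1), (g k * (l:ℂ)^(k+n) * h n k l + b2 l k * (l:ℂ)^(k+n) * h n k l) := by
      apply Finset.sum_congr rfl
      intro k hk
      rw [hbsplit l k (by simpa [Nat.lt_succ_iff] using hk)]
      ring
    rw [hb', Finset.sum_add_distrib, ← hsplit, hre]
    ring
  constructor
  · exact ⟨lam0, hlam0, hid⟩
  · -- quantitative bounds
    set lam1 := min lam0 (min lamb (min lamm 1)) / 2 with hlam1def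
    have hlam1 : 0 < lam1 := by
      have : 0 < min lam0 (min lamb (min lamm 1)) :=
        lt_min hlam0 (lt_min hlamb (lt_min hlamm one_pos))
      positivity
    have hlam1lt : lam1 < min lam0 (min lamb (min lamm 1)) := by
      have : 0 < min lam0 (min lamb (min lamm 1)) :=
        lt_min hlam0 (lt_min hlamb (lt_min hlamm one_pos))
      linarith
    have hlam1lam0 : lam1 < lam0 := lt_of_lt_of_le hlam1lt (min_le_left _ _)
    have hlam1lamb : lam1 < lamb :=
      lt_of_lt_of_le hlam1lt (le_trans (min_le_right _ _) (min_le_left _ _))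
    have hlam1lamm : lam1 < lamm :=
      lt_of_lt_of_le hlam1lt
        (le_trans (min_le_right _ _) (le_trans (min_le_right _ _) (min_le_left _ _)))
    have hlam1le1 : lam1 ≤ 1 :=
      le_of_lt (lt_of_lt_of_le hlam1lt
        (le_trans (min_le_right _ _) (le_trans (min_le_right _ _) (min_le_right _ _))))
    have hlam1ne : lam1 ≠ 0 := ne_of_gt hlam1
    have hS1 : Summable (fun k => ‖g (k + (N+1))‖ * lam1^(k+(N+1))) :=
      (summable_nat_add_iff (f := fun k => ‖g k‖ * lam1^k) (N+1)).2
        (hgs lam1 ⟨hlam1, lt_of_lt_of_le hlam1lam0 (min_le_right _ _)⟩)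
    have hS : Summable (fun k => ‖g (k + (N+1))‖ * lam1^k) := by
      refine Summable.congr (hS1.mul_right ((lam1^(N+1))⁻¹)) (fun k => ?_)
      rw [pow_add]
      field_simp
    set S := ∑' k : ℕ, ‖g (k + (N+1))‖ * lam1^k with hSdef
    have hSnn : 0 ≤ S := tsum_nonneg (fun k => by positivity)
    refine ⟨(N+1) * |Cb| * |Ch| + |Ch| * S, lam1, hlam1, ?_⟩
    intro l hl n hn
    have hl0 : 0 < l := hl.1
    have hllam1 : l < lam1 := hl.2
    have hlle1 : l ≤ 1 := le_trans (le_of_lt hllam1) hlam1le1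
    have hCnn : 0 ≤ (N+1) * |Cb| * |Ch| + |Ch| * S := by positivity
    -- bound on the finite sum
    have bound1 : ‖∑ k ∈ range (N+1), b2 l k * (l:ℂ)^(k + n) * h n k l‖
        ≤ (N+1) * |Cb| * |Ch| * l^(n+N+1) := by
      calc ‖∑ k ∈ range (N+1), b2 l k * (l:ℂ)^(k + n) * h n k l‖
          ≤ ∑ k ∈ range (N+1), ‖b2 l k * (l:ℂ)^(k + n) * h n k l‖ :=
            norm_sum_le _ _
        _ ≤ ∑ _k ∈ range (N+1), |Cb| * |Ch| * l^(n+N+1) := by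
            apply Finset.sum_le_sum
            intro k hk
            have hkN : k ≤ N := by simpa [Nat.lt_succ_iff] using hk
            rw [hterm _ n k l hl0]
            have h1 : ‖h n k l‖ ≤ |Ch| :=
              le_trans (hhb n k l ⟨hl0, lt_trans hllam1
                (lt_of_lt_of_le hlam1lam0 (min_le_left _ _))⟩) (le_abs_self _)
            have h2 : ‖b2 l k‖ ≤ |Cb| * l^(N+1-k) := by
              refine le_trans (hb2 k hkN l ⟨hl0, lt_trans hllam1 hlam1lamb⟩) ?_
              have : (0:ℝ) ≤ l^(N+1-k) := by positivity
              exact mul_le_mul_of_nonneg_right (le_abs_self _) this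
            calc ‖b2 l k‖ * l^(k+n) * ‖h n k l‖
                ≤ (|Cb| * l^(N+1-k)) * l^(k+n) * |Ch| := by
                  apply mul_le_mul (mul_le_mul_of_nonneg_right h2 (by positivity)) h1
                    (norm_nonneg _) (by positivity)
              _ = |Cb| * |Ch| * (l^(N+1-k) * l^(k+n)) := by ring
              _ = |Cb| * |Ch| * l^(n+N+1) := by
                  rw [← pow_add, show N + 1 - k + (k + n) = n + N + 1 from by omega]
        _ = (N+1) * |Cb| * |Ch| * l^(n+N+1) := by
            rw [Finset.sum_const, Finset.card_range]
            push_cast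
            ring
    -- bound on the tail
    have hnle : ∀ k : ℕ, ‖g (k + N + 1) * (l:ℂ)^((k + N + 1) + n) * h n (k + N + 1) l‖
        ≤ (|Ch| * l^(n+N+1)) * (‖g (k + (N+1))‖ * lam1^k) := by
      intro k
      rw [hterm _ n (k + N + 1) l hl0]
      have h1 : ‖h n (k + N + 1) l‖ ≤ |Ch| :=
        le_trans (hhb n (k + N + 1) l ⟨hl0, lt_trans hllam1
          (lt_of_lt_of_le hlam1lam0 (min_le_left _ _))⟩) (le_abs_self _)
      have h2 : l^((k + N + 1) + n) = l^(n+N+1) * l^k := by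
        rw [← pow_add]
        congr 1
        omega
      have h3 : l^k ≤ lam1^k := pow_le_pow_left₀ (le_of_lt hl0) (le_of_lt hllam1) k
      calc ‖g (k + N + 1)‖ * l^((k + N + 1) + n) * ‖h n (k + N + 1) l‖
          ≤ ‖g (k + N + 1)‖ * l^((k + N + 1) + n) * |Ch| := by
            have : (0:ℝ) ≤ ‖g (k + N + 1)‖ * l^((k + N + 1) + n) := by positivity
            exact mul_le_mul_of_nonneg_left h1 this
        _ = (|Ch| * l^(n+N+1)) * (‖g (k + (N+1))‖ * l^k) := by
            rw [h2, show k + (N+1) = k + N + 1 from rfl]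
            ring
        _ ≤ (|Ch| * l^(n+N+1)) * (‖g (k + (N+1))‖ * lam1^k) := by
            apply mul_le_mul_of_nonneg_left _ (by positivity)
            exact mul_le_mul_of_nonneg_left h3 (norm_nonneg _)
    have hsummaj : Summable (fun k => (|Ch| * l^(n+N+1)) * (‖g (k + (N+1))‖ * lam1^k)) :=
      hS.mul_left _
    have hsumnorm : Summable
        (fun k => ‖g (k + N + 1) * (l:ℂ)^((k + N + 1) + n) * h n (k + N + 1) l‖) :=
      hsummaj.of_nonneg_of_le (fun k => norm_nonneg _) hnle
    have bound2 : ‖∑' k : ℕ, g (k + N + 1) * (l:ℂ)^((k + N + 1) + n) * h n (k + N + 1) l‖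
        ≤ |Ch| * S * l^(n+N+1) := by
      calc ‖∑' k : ℕ, g (k + N + 1) * (l:ℂ)^((k + N + 1) + n) * h n (k + N + 1) l‖
          ≤ ∑' k : ℕ, ‖g (k + N + 1) * (l:ℂ)^((k + N + 1) + n) * h n (k + N + 1) l‖ :=
            norm_tsum_le_tsum_norm hsumnorm
        _ ≤ ∑' k : ℕ, (|Ch| * l^(n+N+1)) * (‖g (k + (N+1))‖ * lam1^k) :=
            Summable.tsum_le_tsum hnle hsumnorm hsummaj
        _ = (|Ch| * l^(n+N+1)) * S := tsum_mul_left
        _ = |Ch| * S * l^(n+N+1) := by ring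
    have key : ‖fhat n l - f n l‖ ≤ ((N+1) * |Cb| * |Ch| + |Ch| * S) * l^(n+N+1) := by
      rw [hid l ⟨hl0, lt_trans hllam1 hlam1lam0⟩ n]
      refine le_trans (norm_sub_le _ _) ?_
      calc ‖∑ k ∈ range (N+1), b2 l k * (l:ℂ)^(k + n) * h n k l‖ +
            ‖∑' k : ℕ, g (k + N + 1) * (l:ℂ)^((k + N + 1) + n) * h n (k + N + 1) l‖
          ≤ (N+1) * |Cb| * |Ch| * l^(n+N+1) + |Ch| * S * l^(n+N+1) :=
            add_le_add bound1 bound2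
        _ = ((N+1) * |Cb| * |Ch| + |Ch| * S) * l^(n+N+1) := by ring
    have key2 : ‖fhat n l - f n l‖ ≤ ((N+1) * |Cb| * |Ch| + |Ch| * S) * l^(2*N+3) := by
      rcases le_or_gt n (N+1) with hnN | hnN
      · have hz : fhat n l - f n l = 0 := by
          rw [hm l ⟨hl0, lt_trans hllam1 hlam1lamm⟩ n hn hnN]
          ring
        rw [hz, norm_zero]
        positivity
      · refine le_trans key ?_
        apply mul_le_mul_of_nonneg_left _ hCnn
        exact pow_le_pow_of_le_one (le_of_lt hl0) hlle1 (by omega)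
    refine ⟨key, key2, ?_⟩
    rw [div_le_iff₀ hl0]
    calc ‖fhat n l - f n l‖ ≤ ((N+1) * |Cb| * |Ch| + |Ch| * S) * l^(2*N+3) := key2
      _ = ((N+1) * |Cb| * |Ch| + |Ch| * S) * l^(2*N+2) * l := by rw [pow_succ]; ring
end
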